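/- arXiv:1705.08855 — 2 statements merged into one kernel-verified Lean document; each statement's English description precedes it below -/
import Mathlib

section
/- Let a be a fixed even positive integer and let r : ℕ → ℕ satisfy r(k) = o(k^{1/2}) as k → ∞. Then E[|X_{k+r(k)} − Y_k|^a] = Θ(k^{a/2})/λ^a; that is, there exist constants c_1, c_2 > 0 and K (independent of λ) such that for all λ > 0 and all k ≥ K, c_1 · k^{a/2}/λ^a ≤ E[|X_{k+r(k)} − Y_k|^a] ≤ c_2 · k^{a/2}/λ^a. -/
open MeasureTheory ProbabilityTheory Filter


section AuxLemmas

open Finset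

variable {Ω : Type*} [MeasureSpace Ω] [IsProbabilityMeasure (ℙ : Measure Ω)] {ι : Type*}

lemma aux_prod_int [DecidableEq ι]
    (V : ι → Ω → ℝ) (hmeas : ∀ i, Measurable (V i))
    (hindep : iIndepFun V ℙ)
    (hint : ∀ i, Integrable (V i) ℙ) (s : Finset ι) :
    Integrable (fun ω => ∏ i ∈ s, V i ω) ℙ ∧
      ∫ ω, ∏ i ∈ s, V i ω ∂ℙ = ∏ i ∈ s, ∫ ω, V i ω ∂ℙ := by
  classical
  induction s using Finset.cons_induction with
  | empty => simp [integrable_const]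
  | cons i s hi ih =>
    have hind : IndepFun (∏ j ∈ s, V j) (V i) ℙ :=
      hindep.indepFun_finsetProd_of_notMem hmeas hi
    have hPs : Integrable (∏ j ∈ s, V j) ℙ := by
      have := ih.1; rwa [Finset.prod_fn]
    have hmul : Integrable ((∏ j ∈ s, V j) * V i) ℙ := hind.integrable_mul hPs (hint i)
    have heq : (fun ω => ∏ j ∈ Finset.cons i s hi, V j ω) = (∏ j ∈ s, V j) * V i := by
      funext ω; rw [Finset.prod_cons]; simp [Finset.prod_apply, mul_comm]
    constructor
    · rw [heq]; exact hmul
    · have h2 := hind.integral_mul_eq_mul_integral hPs.aestronglyMeasurable (hint i).aestronglyMeasurable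
      calc ∫ ω, ∏ j ∈ Finset.cons i s hi, V j ω ∂ℙ
          = ∫ ω, (∏ j ∈ s, V j) ω * V i ω ∂ℙ := by rw [show (fun ω => ∏ j ∈ Finset.cons i s hi, V j ω) = fun ω => (∏ j ∈ s, V j) ω * V i ω from heq]
        _ = (∫ ω, (∏ j ∈ s, V j) ω ∂ℙ) * ∫ ω, V i ω ∂ℙ := h2
        _ = ∏ j ∈ Finset.cons i s hi, ∫ ω, V j ω ∂ℙ := by
            rw [Finset.prod_cons, mul_comm]
            congr 1
            rw [show (fun ω => (∏ j ∈ s, V j) ω) = fun ω => ∏ j ∈ s, V j ω by funext ω; simp [Finset.prod_apply]]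
            exact ih.2


lemma aux_sum_pow_int [DecidableEq ι]
    (W : ι → Ω → ℝ) (hmeas : ∀ i, Measurable (W i))
    (hindep : iIndepFun W ℙ)
    (a : ℕ) (hint : ∀ i, ∀ p, p ≤ a → Integrable (fun ω => W i ω ^ p) ℙ)
    (s : Finset ι) (t : ℕ) (hta : t ≤ a) :
    Integrable (fun ω => (∑ i ∈ s, W i ω) ^ t) ℙ ∧
    ∫ ω, (∑ i ∈ s, W i ω) ^ t ∂ℙ =
      ∑ f ∈ s.piAntidiag t, (Nat.multinomial s f : ℝ) * ∏ i ∈ s, ∫ ω, W i ω ^ f i ∂ℙ := by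
  classical
  have key : ∀ f ∈ s.piAntidiag t,
      Integrable (fun ω => ∏ i ∈ s, W i ω ^ f i) ℙ ∧
      ∫ ω, ∏ i ∈ s, W i ω ^ f i ∂ℙ = ∏ i ∈ s, ∫ ω, W i ω ^ f i ∂ℙ := by
    intro f hf
    rw [Finset.mem_piAntidiag] at hf
    have hindep' : iIndepFun
        (fun i => (fun x : ℝ => x ^ f i) ∘ W i) ℙ :=
      hindep.comp _ (fun i => measurable_id.pow_const (f i))
    have hint' : ∀ i, Integrable ((fun x : ℝ => x ^ f i) ∘ W i) ℙ := by
      intro i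
      by_cases hi : i ∈ s
      · exact hint i (f i) (le_trans (by exact hf.1 ▸ Finset.single_le_sum (fun j _ => Nat.zero_le (f j)) hi) hta)
      · have : f i = 0 := by by_contra h; exact hi (hf.2 i h)
        simp only [this, Function.comp, pow_zero]
        exact integrable_const 1
    exact aux_prod_int _ (fun i => (hmeas i).pow_const (f i)) hindep' hint' s
  have hexp : (fun ω => (∑ i ∈ s, W i ω) ^ t)
      = fun ω => ∑ f ∈ s.piAntidiag t, (Nat.multinomial s f : ℝ) * ∏ i ∈ s, W i ω ^ f i := by
    funext ω; exact Finset.sum_pow_eq_sum_piAntidiag s (fun i => W i ω) t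
  constructor
  · rw [hexp]
    exact integrable_finset_sum _ (fun f hf => ((key f hf).1.const_mul _))
  · rw [hexp, integral_finset_sum _ (fun f hf => ((key f hf).1.const_mul _))]
    refine Finset.sum_congr rfl fun f hf => ?_
    rw [MeasureTheory.integral_const_mul, (key f hf).2]


lemma aux_sum_sq [DecidableEq ι]
    (W : ι → Ω → ℝ) (hmeas : ∀ i, Measurable (W i))
    (hindep : iIndepFun W ℙ)
    (hint1 : ∀ i, Integrable (W i) ℙ) (hint2 : ∀ i, Integrable (fun ω => W i ω ^ 2) ℙ)
    (h0 : ∀ i, ∫ ω, W i ω ∂ℙ = 0) (s : Finset ι) :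
    ∫ ω, (∑ i ∈ s, W i ω) ^ 2 ∂ℙ = ∑ i ∈ s, ∫ ω, W i ω ^ 2 ∂ℙ := by
  classical
  suffices h : Integrable (fun ω => ∑ i ∈ s, W i ω) ℙ ∧
      Integrable (fun ω => (∑ i ∈ s, W i ω) ^ 2) ℙ ∧
      ∫ ω, (∑ i ∈ s, W i ω) ^ 2 ∂ℙ = ∑ i ∈ s, ∫ ω, W i ω ^ 2 ∂ℙ by exact h.2.2
  induction s using Finset.cons_induction with
  | empty => simp [integrable_const]
  | cons i s hi ih =>
    obtain ⟨ihS, ihS2, ihval⟩ := ih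
    have hind : IndepFun (∑ j ∈ s, W j) (W i) ℙ :=
      hindep.indepFun_finsetSum_of_notMem hmeas hi
    have hSfn : (∑ j ∈ s, W j) = fun ω => ∑ j ∈ s, W j ω := by
      funext ω; simp [Finset.sum_apply]
    have hmul : Integrable (fun ω => (∑ j ∈ s, W j ω) * W i ω) ℙ := by
      have := hind.integrable_mul (hSfn ▸ ihS) (hint1 i)
      rw [hSfn] at this; exact this
    have hintmul : ∫ ω, (∑ j ∈ s, W j ω) * W i ω ∂ℙ = 0 := by
      have := hind.integral_mul_eq_mul_integral (hSfn ▸ ihS).aestronglyMeasurable (hint1 i).aestronglyMeasurable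
      simp only [hSfn] at this ⊢
      rw [show (fun ω => (∑ j ∈ s, W j ω) * W i ω) = (fun ω => ∑ j ∈ s, W j ω) * W i from rfl]
      rw [this, h0 i, mul_zero]
    have hS' : Integrable (fun ω => ∑ j ∈ Finset.cons i s hi, W j ω) ℙ := by
      simp only [Finset.sum_cons]
      exact (hint1 i).add ihS
    have hsq : (fun ω => (∑ j ∈ Finset.cons i s hi, W j ω) ^ 2)
        = fun ω => W i ω ^ 2 + 2 * ((∑ j ∈ s, W j ω) * W i ω) + (∑ j ∈ s, W j ω) ^ 2 := by
      funext ω; simp only [Finset.sum_cons]; ring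
    have hS2' : Integrable (fun ω => (∑ j ∈ Finset.cons i s hi, W j ω) ^ 2) ℙ := by
      rw [hsq]; exact ((hint2 i).add (hmul.const_mul 2)).add ihS2
    refine ⟨hS', hS2', ?_⟩
    rw [hsq]
    have hA : Integrable (fun ω => W i ω ^ 2 + 2 * ((∑ j ∈ s, W j ω) * W i ω)) ℙ := by
      exact (hint2 i).add (hmul.const_mul 2)
    rw [integral_add hA ihS2,
        integral_add (hint2 i) (hmul.const_mul 2), MeasureTheory.integral_const_mul, hintmul, ihval,
        Finset.sum_cons]
    ring


lemma aux_piAntidiag_card [DecidableEq ι] (T : Finset ι) (a : ℕ) :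
    (T.piAntidiag a).card ≤ (a + 1) ^ T.card := by
  classical
  let G : (ι → ℕ) → (T → Fin (a + 1)) :=
    fun f i => ⟨min (f i) a, Nat.lt_succ_of_le (min_le_right _ _)⟩
  have hinj : Set.InjOn G (T.piAntidiag a : Set (ι → ℕ)) := ?_
  · have h := Finset.card_le_card_of_injOn G (fun f _ => Finset.mem_univ (G f)) hinj
    calc (T.piAntidiag a).card ≤ (Finset.univ : Finset (T → Fin (a+1))).card := h
      _ = (a + 1) ^ T.card := by
        rw [Finset.card_univ, Fintype.card_fun, Fintype.card_fin, Fintype.card_coe]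
  · intro f hf g hg hfg
    rw [Finset.mem_coe, Finset.mem_piAntidiag] at hf hg
    funext i
    by_cases hi : i ∈ T
    · have h1 : f i ≤ a := hf.1 ▸ Finset.single_le_sum (fun j _ => Nat.zero_le (f j)) hi
      have h2 : g i ≤ a := hg.1 ▸ Finset.single_le_sum (fun j _ => Nat.zero_le (g j)) hi
      have := congrFun hfg (⟨i, hi⟩ : T)
      simpa [G, Fin.ext_iff, min_eq_left h1, min_eq_left h2] using this
    · have h1 : f i = 0 := by by_contra h; exact hi (hf.2 i h)
      have h2 : g i = 0 := by by_contra h; exact hi (hg.2 i h)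
      rw [h1, h2]

lemma aux_powerset_card [DecidableEq ι] (s : Finset ι) (m : ℕ) (hs : 1 ≤ s.card) :
    (s.powerset.filter (fun T => T.card ≤ m)).card ≤ (m + 1) * s.card ^ m := by
  classical
  have heq : s.powerset.filter (fun T => T.card ≤ m)
      = (Finset.range (m + 1)).biUnion (fun j => s.powersetCard j) := by
    ext T
    simp only [Finset.mem_filter, Finset.mem_powerset, Finset.mem_biUnion, Finset.mem_range,
      Finset.mem_powersetCard, Nat.lt_succ_iff]
    constructor
    · rintro ⟨h1, h2⟩; exact ⟨T.card, h2, h1, rfl⟩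
    · rintro ⟨j, hj, h1, rfl⟩; exact ⟨h1, hj⟩
  rw [heq]
  calc ((Finset.range (m + 1)).biUnion (fun j => s.powersetCard j)).card
      ≤ ∑ j ∈ Finset.range (m + 1), (s.powersetCard j).card := Finset.card_biUnion_le
    _ ≤ ∑ j ∈ Finset.range (m + 1), s.card ^ m := by
        refine Finset.sum_le_sum fun j hj => ?_
        rw [Finset.card_powersetCard]
        calc s.card.choose j ≤ s.card ^ j := Nat.choose_le_pow _ _
          _ ≤ s.card ^ m := Nat.pow_le_pow_right hs (Nat.lt_succ_iff.mp (Finset.mem_range.mp hj))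
    _ = (m + 1) * s.card ^ m := by rw [Finset.sum_const, Finset.card_range, smul_eq_mul]

lemma aux_card_A [DecidableEq ι] (s : Finset ι) (a m : ℕ) (hs : 1 ≤ s.card) :
    ((s.piAntidiag a).filter (fun f => (s.filter (fun i => f i ≠ 0)).card ≤ m)).card
      ≤ (m + 1) * s.card ^ m * (a + 1) ^ m := by
  classical
  set A := (s.piAntidiag a).filter (fun f => (s.filter (fun i => f i ≠ 0)).card ≤ m) with hA
  set B := (s.powerset.filter (fun T => T.card ≤ m)).sigma (fun T => T.piAntidiag a) with hB
  have hinj : A.card ≤ B.card := by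
    refine Finset.card_le_card_of_injOn
      (f := fun f => (⟨s.filter (fun i => f i ≠ 0), f⟩ : Σ _ : Finset ι, (ι → ℕ))) ?_ ?_
    · intro f hf
      rw [Finset.mem_coe, Finset.mem_filter, Finset.mem_piAntidiag] at hf
      obtain ⟨⟨hsum, hsupp⟩, hcard⟩ := hf
      rw [Finset.mem_coe, hB, Finset.mem_sigma, Finset.mem_filter, Finset.mem_powerset]
      refine ⟨⟨Finset.filter_subset _ _, hcard⟩, ?_⟩
      rw [Finset.mem_piAntidiag]
      constructor
      · rw [Finset.sum_filter_ne_zero]; exact hsum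
      · intro i hi; exact Finset.mem_filter.mpr ⟨hsupp i hi, hi⟩
    · intro f hf g hg hfg
      exact congrArg Sigma.snd hfg
  calc A.card ≤ B.card := hinj
    _ = ∑ T ∈ s.powerset.filter (fun T => T.card ≤ m), (T.piAntidiag a).card :=
        Finset.card_sigma _ _
    _ ≤ ∑ T ∈ s.powerset.filter (fun T => T.card ≤ m), (a + 1) ^ m := by
        refine Finset.sum_le_sum fun T hT => ?_
        rw [Finset.mem_filter] at hT
        calc (T.piAntidiag a).card ≤ (a + 1) ^ T.card := aux_piAntidiag_card T a
          _ ≤ (a + 1) ^ m := Nat.pow_le_pow_right (by omega) hT.2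
    _ = (s.powerset.filter (fun T => T.card ≤ m)).card * (a + 1) ^ m := by
        rw [Finset.sum_const, smul_eq_mul]
    _ ≤ (m + 1) * s.card ^ m * (a + 1) ^ m := by
        exact Nat.mul_le_mul_right _ (aux_powerset_card s m hs)


lemma aux_upper [DecidableEq ι]
    (W : ι → Ω → ℝ) (hmeas : ∀ i, Measurable (W i))
    (hindep : iIndepFun W ℙ)
    (a m : ℕ) (ham : a = 2 * m)
    (hint : ∀ i, ∀ p, p ≤ a → Integrable (fun ω => W i ω ^ p) ℙ)
    (h0 : ∀ i, ∫ ω, W i ω ∂ℙ = 0)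
    (M : ℝ) (hM1 : 1 ≤ M)
    (hM : ∀ i, ∀ p, p ≤ a → |∫ ω, W i ω ^ p ∂ℙ| ≤ M)
    (s : Finset ι) (hs : 1 ≤ s.card) :
    ∫ ω, (∑ i ∈ s, W i ω) ^ a ∂ℙ ≤
      ((a.factorial : ℝ) * M ^ a * ((m + 1) * (a + 1) ^ m)) * (s.card : ℝ) ^ m := by
  classical
  obtain ⟨hI, hval⟩ := aux_sum_pow_int W hmeas hindep a hint s a le_rfl
  rw [hval]
  set A := (s.piAntidiag a).filter (fun f => (s.filter (fun i => f i ≠ 0)).card ≤ m) with hA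
  have hAsub : A ⊆ s.piAntidiag a := Finset.filter_subset _ _
  have hvanish : ∀ f ∈ s.piAntidiag a, f ∉ A →
      (Nat.multinomial s f : ℝ) * ∏ i ∈ s, ∫ ω, W i ω ^ f i ∂ℙ = 0 := by
    intro f hf hfA
    rw [hA, Finset.mem_filter] at hfA
    push_neg at hfA
    have hcard := hfA hf
    rw [Finset.mem_piAntidiag] at hf
    -- there must exist i ∈ s with f i = 1
    have hone : ∃ i ∈ s, f i = 1 := by
      by_contra hno
      push_neg at hno
      have h2 : ∀ i ∈ s.filter (fun i => f i ≠ 0), 2 ≤ f i := by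
        intro i hi
        rw [Finset.mem_filter] at hi
        have := hno i hi.1
        omega
      have : 2 * (s.filter (fun i => f i ≠ 0)).card ≤ a := by
        calc 2 * (s.filter (fun i => f i ≠ 0)).card
            = ∑ _i ∈ s.filter (fun i => f i ≠ 0), 2 := by
              rw [Finset.sum_const, smul_eq_mul, mul_comm]
          _ ≤ ∑ i ∈ s.filter (fun i => f i ≠ 0), f i := Finset.sum_le_sum h2
          _ = ∑ i ∈ s, f i := Finset.sum_filter_ne_zero _
          _ = a := hf.1
      omega
    obtain ⟨i, his, hfi⟩ := hone
    have : ∫ ω, W i ω ^ f i ∂ℙ = 0 := by rw [hfi]; simpa using h0 i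
    rw [Finset.prod_eq_zero his this, mul_zero]
  rw [← Finset.sum_subset hAsub hvanish]
  have hbound : ∀ f ∈ A,
      (Nat.multinomial s f : ℝ) * ∏ i ∈ s, ∫ ω, W i ω ^ f i ∂ℙ ≤ (a.factorial : ℝ) * M ^ a := by
    intro f hfA
    have hfA' := hfA
    rw [hA, Finset.mem_filter] at hfA'
    obtain ⟨hf, hcard⟩ := hfA'
    rw [Finset.mem_piAntidiag] at hf
    have hmul_le : (Nat.multinomial s f : ℝ) ≤ (a.factorial : ℝ) := by
      have hdvd : Nat.multinomial s f ∣ a.factorial := by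
        rw [← hf.1]; exact Dvd.intro_left _ (Nat.multinomial_spec s f)
      exact_mod_cast Nat.le_of_dvd a.factorial_pos hdvd
    have hprod_le : |∏ i ∈ s, ∫ ω, W i ω ^ f i ∂ℙ| ≤ M ^ a := by
      rw [Finset.abs_prod]
      rw [← Finset.prod_filter_mul_prod_filter_not s (fun i => f i ≠ 0)]
      have h1 : ∏ i ∈ s.filter (fun i => ¬ f i ≠ 0), |∫ ω, W i ω ^ f i ∂ℙ| = 1 := by
        refine Finset.prod_eq_one fun i hi => ?_
        rw [Finset.mem_filter] at hi
        have : f i = 0 := by simpa using hi.2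
        rw [this]
        simp
      rw [h1, mul_one]
      calc ∏ i ∈ s.filter (fun i => f i ≠ 0), |∫ ω, W i ω ^ f i ∂ℙ|
          ≤ ∏ _i ∈ s.filter (fun i => f i ≠ 0), M := by
            refine Finset.prod_le_prod (fun i _ => abs_nonneg _) fun i hi => ?_
            rw [Finset.mem_filter] at hi
            exact hM i (f i) (le_trans (hf.1 ▸ Finset.single_le_sum
              (fun j _ => Nat.zero_le (f j)) hi.1) le_rfl)
        _ = M ^ (s.filter (fun i => f i ≠ 0)).card := by rw [Finset.prod_const]
        _ ≤ M ^ a := pow_le_pow_right₀ hM1 (by omega)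
    calc (Nat.multinomial s f : ℝ) * ∏ i ∈ s, ∫ ω, W i ω ^ f i ∂ℙ
        ≤ (Nat.multinomial s f : ℝ) * |∏ i ∈ s, ∫ ω, W i ω ^ f i ∂ℙ| := by
          exact mul_le_mul_of_nonneg_left (le_abs_self _) (Nat.cast_nonneg _)
      _ ≤ (a.factorial : ℝ) * M ^ a := by
          refine mul_le_mul hmul_le hprod_le (abs_nonneg _) (Nat.cast_nonneg _)
  calc ∑ f ∈ A, (Nat.multinomial s f : ℝ) * ∏ i ∈ s, ∫ ω, W i ω ^ f i ∂ℙ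
      ≤ ∑ _f ∈ A, (a.factorial : ℝ) * M ^ a := Finset.sum_le_sum hbound
    _ = (A.card : ℝ) * ((a.factorial : ℝ) * M ^ a) := by rw [Finset.sum_const, nsmul_eq_mul]
    _ ≤ ((m + 1 : ℕ) * s.card ^ m * (a + 1) ^ m : ℕ) * ((a.factorial : ℝ) * M ^ a) := by
        refine mul_le_mul_of_nonneg_right ?_ (by positivity)
        exact_mod_cast aux_card_A s a m hs
    _ = ((a.factorial : ℝ) * M ^ a * ((m + 1) * (a + 1) ^ m)) * (s.card : ℝ) ^ m := by
        push_cast; ring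


end AuxLemmas

/-- For an even positive integer `a`, two identical independent general random processes
`X_k = (1/λ) Σ_{i=1}^k ξ_i`, `Y_k = (1/λ) Σ_{i=1}^k τ_i`, and `r(k) = o(k^(1/2))`,
one has `E[|X_{k+r(k)} − Y_k|^a] = Θ(k^(a/2))/λ^a`, with constants independent of `λ`. -/
theorem expected_abs_diff_pow_shift_theta
    {Ω : Type*} [MeasureSpace Ω] [IsProbabilityMeasure (ℙ : Measure Ω)]
    (a : ℕ) (ha0 : 0 < a) (hae : Even a)
    (ξ τ : ℕ → Ω → ℝ)
    (hmeasξ : ∀ i, Measurable (ξ i)) (hmeasτ : ∀ i, Measurable (τ i))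
    (hindep : iIndepFun (Sum.elim ξ τ) ℙ)
    (hidξ : ∀ i j : ℕ, IdentDistrib (ξ i) (ξ j) ℙ ℙ)
    (hidξτ : ∀ i : ℕ, IdentDistrib (ξ i) (τ i) ℙ ℙ)
    (hpos : ∀ i ω, 0 < ξ i ω)
    (habs : ∀ i, (ℙ : Measure Ω).map (ξ i) ≪ (volume : Measure ℝ))
    (hmean : ∀ i, ∫ ω, ξ i ω ∂ℙ = 1)
    (C : ℝ)
    (hint : ∀ i, ∀ p : ℕ, p ≤ a → Integrable (fun ω => ξ i ω ^ p) ℙ)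
    (hmom : ∀ i, ∀ p : ℕ, 2 ≤ p → p ≤ a → ∫ ω, ξ i ω ^ p ∂ℙ ≤ C)
    (r : ℕ → ℕ)
    (hr : (fun k : ℕ => (r k : ℝ)) =o[atTop] (fun k : ℕ => (k : ℝ) ^ ((1 : ℝ) / 2))) :
    ∃ c₁ c₂ : ℝ, ∃ K : ℕ, 0 < c₁ ∧ 0 < c₂ ∧
      ∀ lam : ℝ, 0 < lam → ∀ k : ℕ, K ≤ k →
        c₁ * (k : ℝ) ^ (a / 2) / lam ^ a
          ≤ (∫ ω, |(1 / lam) * (∑ i ∈ Finset.range (k + r k), ξ i ω)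
                  - (1 / lam) * (∑ i ∈ Finset.range k, τ i ω)| ^ a ∂ℙ) ∧
        (∫ ω, |(1 / lam) * (∑ i ∈ Finset.range (k + r k), ξ i ω)
                - (1 / lam) * (∑ i ∈ Finset.range k, τ i ω)| ^ a ∂ℙ)
          ≤ c₂ * (k : ℝ) ^ (a / 2) / lam ^ a := by
  classical
  obtain ⟨m, hm⟩ := hae
  have ham : a = 2 * m := by omega
  have ha2 : a / 2 = m := by omega
  have hm1 : 1 ≤ m := by omega
  -- basic facts about ξ and τ
  have hidp : ∀ (i : ℕ) (p : ℕ),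
      IdentDistrib (fun ω => ξ i ω ^ p) (fun ω => τ i ω ^ p) ℙ ℙ :=
    fun i p => (hidξτ i).comp (measurable_id.pow_const p)
  have hintτ : ∀ i p, p ≤ a → Integrable (fun ω => τ i ω ^ p) ℙ :=
    fun i p hp => ((hidp i p).integrable_iff).mp (hint i p hp)
  have hmomτ : ∀ i (p : ℕ), ∫ ω, τ i ω ^ p ∂ℙ = ∫ ω, ξ i ω ^ p ∂ℙ :=
    fun i p => ((hidp i p).integral_eq).symm
  have hintξ1 : ∀ i, Integrable (ξ i) ℙ := by
    intro i; simpa using hint i 1 (by omega)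
  have hintτ1 : ∀ i, Integrable (τ i) ℙ := by
    intro i; simpa using hintτ i 1 (by omega)
  have hmeanτ : ∀ i, ∫ ω, τ i ω ∂ℙ = 1 := by
    intro i
    have := hmomτ i 1
    simpa [hmean i] using this
  -- the combined process Z and centered process W
  set Z : ℕ ⊕ ℕ → Ω → ℝ := Sum.elim ξ τ with hZdef
  have hmeasZ : ∀ j, Measurable (Z j) := by rintro (i | i); exacts [hmeasξ i, hmeasτ i]
  have hintZ : ∀ j p, p ≤ a → Integrable (fun ω => Z j ω ^ p) ℙ := by
    rintro (i | i) p hp; exacts [hint i p hp, hintτ i p hp]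
  set B : ℝ := max C 1 with hBdef
  have hB1 : (1 : ℝ) ≤ B := le_max_right _ _
  have hmomξ' : ∀ i (p : ℕ), p ≤ a → ∫ ω, ξ i ω ^ p ∂ℙ ≤ B := by
    intro i p hp
    match p with
    | 0 => simp; linarith
    | 1 => simp only [pow_one, hmean i]; linarith
    | (q + 2) => exact le_trans (hmom i (q + 2) (by omega) hp) (le_max_left _ _)
  have hmomZ : ∀ j (p : ℕ), p ≤ a → ∫ ω, Z j ω ^ p ∂ℙ ≤ B := by
    rintro (i | i) p hp
    · exact hmomξ' i p hp
    · rw [show Z (Sum.inr i) = τ i from rfl, hmomτ i p]; exact hmomξ' i p hp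
  have hZnn : ∀ j, ∀ᵐ ω ∂ℙ, 0 ≤ Z j ω := by
    rintro (i | i)
    · exact Filter.Eventually.of_forall fun ω => (hpos i ω).le
    · have hmm := (hidξτ i).measure_mem_eq (measurableSet_Iio (a := (0:ℝ)))
      have hξ0 : ξ i ⁻¹' Set.Iio 0 = ∅ := by
        ext ω; simp [Set.mem_preimage, not_lt.mpr (hpos i ω).le]
      rw [hξ0] at hmm
      simp only [measure_empty] at hmm
      rw [ae_iff]
      convert hmm.symm using 2
      ext ω
      simp only [Set.mem_setOf_eq, Set.mem_preimage, Set.mem_Iio, not_le]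
      exact Iff.rfl
  -- W
  set g : ℕ ⊕ ℕ → ℝ → ℝ := Sum.elim (fun _ x => x - 1) (fun _ x => 1 - x) with hgdef
  set W : ℕ ⊕ ℕ → Ω → ℝ := fun j => g j ∘ Z j with hWdef
  have hWl : ∀ i ω, W (Sum.inl i) ω = ξ i ω - 1 := fun i ω => rfl
  have hWr : ∀ i ω, W (Sum.inr i) ω = 1 - τ i ω := fun i ω => rfl
  have hmeasg : ∀ j, Measurable (g j) := by
    rintro (i | i)
    · exact measurable_id.sub_const 1
    · exact (measurable_const.sub measurable_id)
  have hmeasW : ∀ j, Measurable (W j) := fun j => (hmeasg j).comp (hmeasZ j)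
  have hindepW : iIndepFun W ℙ :=
    hindep.comp g hmeasg
  -- shifted-power integrability
  have hintshift : ∀ j (c : ℝ) (p : ℕ), p ≤ a → Integrable (fun ω => (Z j ω + c) ^ p) ℙ := by
    intro j c p hp
    have heq : (fun ω => (Z j ω + c) ^ p)
        = fun ω => ∑ q ∈ Finset.range (p + 1), Z j ω ^ q * (c ^ (p - q) * (p.choose q : ℝ)) := by
      funext ω
      rw [add_pow]
      exact Finset.sum_congr rfl fun q hq => by ring
    rw [heq]
    exact integrable_finset_sum _ fun q hq =>
      (hintZ j q (le_trans (Nat.lt_succ_iff.mp (Finset.mem_range.mp hq)) hp)).mul_const _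
  have hintW : ∀ j (p : ℕ), p ≤ a → Integrable (fun ω => W j ω ^ p) ℙ := by
    rintro (i | i) p hp
    · have h := hintshift (Sum.inl i) (-1) p hp
      refine h.congr (Filter.Eventually.of_forall fun ω => ?_)
      show (ξ i ω + -1) ^ p = (ξ i ω - 1) ^ p
      ring_nf
    · have h := (hintshift (Sum.inr i) (-1) p hp).const_mul ((-1 : ℝ) ^ p)
      refine h.congr (Filter.Eventually.of_forall fun ω => ?_)
      show (-1 : ℝ) ^ p * (τ i ω + -1) ^ p = (1 - τ i ω) ^ p
      rw [← mul_pow]; congr 1; ring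
  have hintW1 : ∀ j, Integrable (W j) ℙ := by
    intro j; simpa using hintW j 1 (by omega)
  -- centering
  have h0W : ∀ j, ∫ ω, W j ω ∂ℙ = 0 := by
    rintro (i | i)
    · have : (fun ω => W (Sum.inl i) ω) = fun ω => ξ i ω - 1 := by funext ω; rw [hWl]
      rw [show ∫ ω, W (Sum.inl i) ω ∂ℙ = ∫ ω, (ξ i ω - 1) ∂ℙ from by rw [this]]
      rw [integral_sub (hintξ1 i) (integrable_const 1), hmean i]
      simp
    · rw [show ∫ ω, W (Sum.inr i) ω ∂ℙ = ∫ ω, (1 - τ i ω) ∂ℙ from rfl]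
      rw [integral_sub (integrable_const 1) (hintτ1 i), hmeanτ i]
      simp
  -- moment bounds for W
  set M : ℝ := 2 ^ a * B with hMdef
  have hM1 : (1 : ℝ) ≤ M := by
    have : (1 : ℝ) ≤ 2 ^ a := one_le_pow₀ (by norm_num)
    nlinarith
  have hmomW : ∀ j (p : ℕ), p ≤ a → |∫ ω, W j ω ^ p ∂ℙ| ≤ M := by
    intro j p hp
    have habsle : ∀ᵐ ω ∂ℙ, |W j ω| ^ p ≤ (Z j ω + 1) ^ p := by
      filter_upwards [hZnn j] with ω hω
      refine pow_le_pow_left₀ (abs_nonneg _) ?_ p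
      rcases j with i | i
      · rw [hWl]
        calc |ξ i ω - 1| ≤ |ξ i ω| + 1 := by
              calc |ξ i ω - 1| ≤ |ξ i ω| + |(1:ℝ)| := abs_sub _ _
                _ = |ξ i ω| + 1 := by rw [abs_one]
          _ = ξ i ω + 1 := by rw [abs_of_nonneg (hpos i ω).le]
      · rw [hWr, abs_sub_comm]
        calc |τ i ω - 1| ≤ |τ i ω| + 1 := by
              calc |τ i ω - 1| ≤ |τ i ω| + |(1:ℝ)| := abs_sub _ _
                _ = |τ i ω| + 1 := by rw [abs_one]
          _ = τ i ω + 1 := by rw [abs_of_nonneg (show (0:ℝ) ≤ τ i ω from hω)]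
    calc |∫ ω, W j ω ^ p ∂ℙ| ≤ ∫ ω, |W j ω ^ p| ∂ℙ := by
          simpa [Real.norm_eq_abs] using
            norm_integral_le_integral_norm (μ := (ℙ : Measure Ω)) (fun ω => W j ω ^ p)
      _ = ∫ ω, |W j ω| ^ p ∂ℙ := by simp [abs_pow]
      _ ≤ ∫ ω, (Z j ω + 1) ^ p ∂ℙ := by
          refine integral_mono_ae ?_ (hintshift j 1 p hp) habsle
          simpa [abs_pow] using (hintW j p hp).abs
      _ ≤ M := by
          have hexp : (fun ω => (Z j ω + 1) ^ p)
              = fun ω => ∑ q ∈ Finset.range (p + 1), Z j ω ^ q * ((p.choose q : ℝ)) := by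
            funext ω
            rw [add_pow]
            exact Finset.sum_congr rfl fun q hq => by ring
          rw [hexp, integral_finset_sum _ (fun q hq =>
            (hintZ j q (le_trans (Nat.lt_succ_iff.mp (Finset.mem_range.mp hq)) hp)).mul_const _)]
          calc ∑ q ∈ Finset.range (p + 1), ∫ ω, Z j ω ^ q * (p.choose q : ℝ) ∂ℙ
              = ∑ q ∈ Finset.range (p + 1), (∫ ω, Z j ω ^ q ∂ℙ) * (p.choose q : ℝ) := by
                refine Finset.sum_congr rfl fun q hq => ?_
                rw [integral_mul_const]
            _ ≤ ∑ q ∈ Finset.range (p + 1), B * (p.choose q : ℝ) := by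
                refine Finset.sum_le_sum fun q hq => ?_
                exact mul_le_mul_of_nonneg_right
                  (hmomZ j q (le_trans (Nat.lt_succ_iff.mp (Finset.mem_range.mp hq)) hp))
                  (Nat.cast_nonneg _)
            _ = B * 2 ^ p := by
                rw [← Finset.mul_sum]
                congr 1
                rw [← Nat.cast_sum]
                rw [Nat.sum_range_choose]
                push_cast; ring
            _ ≤ M := by
                rw [hMdef]
                have h2 : (2:ℝ) ^ p ≤ 2 ^ a := pow_le_pow_right₀ (by norm_num) hp
                nlinarith [lt_of_lt_of_le one_pos hB1]
  have haeE : Even a := ⟨m, hm⟩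
  -- variance is positive
  have hint20 : Integrable (fun ω => (ξ 0 ω - 1) ^ 2) ℙ := hintW (Sum.inl 0) 2 (by omega)
  set v : ℝ := ∫ ω, (ξ 0 ω - 1) ^ 2 ∂ℙ with hvdef
  have hv0 : 0 ≤ v := integral_nonneg fun ω => sq_nonneg _
  have hvpos : 0 < v := by
    rcases lt_or_eq_of_le hv0 with h | h
    · exact h
    exfalso
    have hzero : (fun ω => (ξ 0 ω - 1) ^ 2) =ᵐ[ℙ] 0 :=
      (integral_eq_zero_iff_of_nonneg (fun ω => sq_nonneg _) hint20).mp h.symm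
    have hae1 : ∀ᵐ ω ∂ℙ, ξ 0 ω = 1 := by
      filter_upwards [hzero] with ω hω
      have h1 : (ξ 0 ω - 1) ^ 2 = 0 := hω
      have h2 := pow_eq_zero_iff (n := 2) (by norm_num) |>.mp h1
      linarith
    have hcompl : ℙ ((ξ 0) ⁻¹' {1})ᶜ = 0 := by
      have h1 := ae_iff.mp hae1
      convert h1 using 2
      ext ω; simp
    have hone : ℙ ((ξ 0) ⁻¹' {1}) = 1 :=
      (prob_compl_eq_zero_iff ((hmeasξ 0) (measurableSet_singleton 1))).mp hcompl
    have hmap : (Measure.map (ξ 0) (ℙ : Measure Ω)) {1} = 0 := habs 0 Real.volume_singleton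
    rw [Measure.map_apply (hmeasξ 0) (measurableSet_singleton 1), hone] at hmap
    exact one_ne_zero hmap
  -- all W j have second moment v
  have hWsq : ∀ j, ∫ ω, W j ω ^ 2 ∂ℙ = v := by
    have hu : Measurable (fun x : ℝ => (x - 1) ^ 2) := (measurable_id.sub_const 1).pow_const 2
    rintro (i | i)
    · have hid : IdentDistrib (fun ω => (ξ i ω - 1) ^ 2) (fun ω => (ξ 0 ω - 1) ^ 2) ℙ ℙ :=
        (hidξ i 0).comp hu
      calc ∫ ω, W (Sum.inl i) ω ^ 2 ∂ℙ = ∫ ω, (ξ i ω - 1) ^ 2 ∂ℙ := rfl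
        _ = v := hid.integral_eq
    · have hid : IdentDistrib (fun ω => (τ i ω - 1) ^ 2) (fun ω => (ξ 0 ω - 1) ^ 2) ℙ ℙ :=
        ((hidξτ i).symm.trans (hidξ i 0)).comp hu
      calc ∫ ω, W (Sum.inr i) ω ^ 2 ∂ℙ = ∫ ω, (τ i ω - 1) ^ 2 ∂ℙ := by
            congr 1; funext ω
            show (1 - τ i ω) ^ 2 = (τ i ω - 1) ^ 2
            ring
        _ = v := hid.integral_eq
  -- elementary inequality
  have hsum_pow : ∀ x y : ℝ, (x + y) ^ a ≤ 2 ^ a * (x ^ a + y ^ a) := by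
    intro x y
    have h1 : |x + y| ≤ 2 * max |x| |y| := by
      calc |x + y| ≤ |x| + |y| := abs_add_le x y
        _ ≤ max |x| |y| + max |x| |y| := add_le_add (le_max_left _ _) (le_max_right _ _)
        _ = 2 * max |x| |y| := by ring
    have h2 : (max |x| |y|) ^ a ≤ x ^ a + y ^ a := by
      have hx : |x| ^ a = x ^ a := haeE.pow_abs x
      have hy : |y| ^ a = y ^ a := haeE.pow_abs y
      have hxnn : 0 ≤ |x| ^ a := pow_nonneg (abs_nonneg x) a
      have hynn : 0 ≤ |y| ^ a := pow_nonneg (abs_nonneg y) a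
      rcases le_total |x| |y| with h | h
      · rw [max_eq_right h]; linarith
      · rw [max_eq_left h]; linarith
    calc (x + y) ^ a = |x + y| ^ a := (haeE.pow_abs _).symm
      _ ≤ (2 * max |x| |y|) ^ a := pow_le_pow_left₀ (abs_nonneg _) h1 a
      _ = 2 ^ a * (max |x| |y|) ^ a := mul_pow _ _ _
      _ ≤ 2 ^ a * (x ^ a + y ^ a) := mul_le_mul_of_nonneg_left h2 (by positivity)
  -- r k eventually small
  obtain ⟨K₀, hK₀⟩ := eventually_atTop.mp (hr.def one_pos)
  set K : ℕ := max K₀ 1 with hKdef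
  -- constants
  have hM0 : (0 : ℝ) < M := lt_of_lt_of_le one_pos hM1
  set cU : ℝ := (a.factorial : ℝ) * M ^ a * ((m + 1) * (a + 1) ^ m) with hcUdef
  have hcU : 0 < cU := by
    have h1 : (0:ℝ) < (a.factorial : ℝ) := by exact_mod_cast a.factorial_pos
    positivity
  set c1 : ℝ := (2 * v) ^ m with hc1def
  set c2 : ℝ := 2 ^ a * (cU * 3 ^ m + 1) with hc2def
  refine ⟨c1, c2, K, pow_pos (by linarith) m, by positivity, ?_⟩
  intro lam hlam k hk
  have hk1 : 1 ≤ k := le_trans (le_max_right _ _) hk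
  have hk1R : (1:ℝ) ≤ (k:ℝ) := by exact_mod_cast hk1
  have hrk : (r k : ℝ) ≤ (k : ℝ) ^ ((1:ℝ)/2) := by
    have h1 := hK₀ k (le_trans (le_max_left _ _) hk)
    rw [Real.norm_eq_abs, Real.norm_eq_abs] at h1
    calc (r k : ℝ) ≤ |(r k : ℝ)| := le_abs_self _
      _ ≤ 1 * |(k:ℝ) ^ ((1:ℝ)/2)| := h1
      _ = (k:ℝ) ^ ((1:ℝ)/2) := by
          rw [one_mul, abs_of_nonneg (Real.rpow_nonneg (Nat.cast_nonneg k) _)]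
  have hhalf : (k:ℝ) ^ ((1:ℝ)/2) ≤ (k:ℝ) := by
    calc (k:ℝ) ^ ((1:ℝ)/2) ≤ (k:ℝ) ^ (1:ℝ) :=
          Real.rpow_le_rpow_of_exponent_le hk1R (by norm_num)
      _ = (k:ℝ) := Real.rpow_one _
  have hrka : ((r k : ℝ)) ^ a ≤ (k:ℝ) ^ m := by
    have hcast : (1:ℝ)/2 * (a:ℝ) = (m:ℝ) := by rw [ham]; push_cast; ring
    calc ((r k : ℝ)) ^ a ≤ ((k:ℝ) ^ ((1:ℝ)/2)) ^ a := pow_le_pow_left₀ (Nat.cast_nonneg _) hrk a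
      _ = (k:ℝ) ^ m := by
          rw [← Real.rpow_natCast ((k:ℝ) ^ ((1:ℝ)/2)) a, ← Real.rpow_mul (Nat.cast_nonneg k),
            hcast, Real.rpow_natCast]
  -- the index set
  set sk : Finset (ℕ ⊕ ℕ) :=
    ((Finset.range (k + r k)).map ⟨Sum.inl, Sum.inl_injective⟩) ∪
    ((Finset.range k).map ⟨Sum.inr, Sum.inr_injective⟩) with hskdef
  have hdisj : Disjoint ((Finset.range (k + r k)).map ⟨Sum.inl, Sum.inl_injective⟩)
      (((Finset.range k).map ⟨Sum.inr, Sum.inr_injective⟩) : Finset (ℕ ⊕ ℕ)) := by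
    rw [Finset.disjoint_left]
    rintro x hx hy
    rw [Finset.mem_map] at hx hy
    obtain ⟨i, _, rfl⟩ := hx
    obtain ⟨i', _, h⟩ := hy
    simp at h
  have hcard : sk.card = (k + r k) + k := by
    rw [hskdef, Finset.card_union_of_disjoint hdisj, Finset.card_map, Finset.card_map,
      Finset.card_range, Finset.card_range]
  have hcard1 : 1 ≤ sk.card := by rw [hcard]; omega
  set S : Ω → ℝ := fun ω => ∑ j ∈ sk, W j ω with hSdef
  set D : Ω → ℝ := fun ω =>
    (∑ i ∈ Finset.range (k + r k), ξ i ω) - ∑ i ∈ Finset.range k, τ i ω with hDdef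
  have hDS : ∀ ω, D ω = S ω + (r k : ℝ) := by
    intro ω
    show (∑ i ∈ Finset.range (k + r k), ξ i ω) - ∑ i ∈ Finset.range k, τ i ω
      = (∑ j ∈ sk, W j ω) + (r k : ℝ)
    rw [hskdef, Finset.sum_union hdisj, Finset.sum_map, Finset.sum_map]
    simp only [Function.Embedding.coeFn_mk]
    have h1 : ∀ i ω', W (Sum.inl i) ω' = ξ i ω' - 1 := fun i ω' => rfl
    have h2 : ∀ i ω', W (Sum.inr i) ω' = 1 - τ i ω' := fun i ω' => rfl
    simp only [h1, h2, Finset.sum_sub_distrib, Finset.sum_const, Finset.card_range,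
      smul_eq_mul, mul_one]
    push_cast
    ring
  -- integrability of powers
  have hSint : ∀ t, t ≤ a → Integrable (fun ω => S ω ^ t) ℙ := fun t ht =>
    (aux_sum_pow_int W hmeasW hindepW a hintW sk t ht).1
  have hDint : ∀ t, t ≤ a → Integrable (fun ω => D ω ^ t) ℙ := by
    intro t ht
    have heq : (fun ω => D ω ^ t) = fun ω =>
        ∑ q ∈ Finset.range (t + 1), S ω ^ q * ((r k : ℝ) ^ (t - q) * (t.choose q : ℝ)) := by
      funext ω
      rw [hDS ω, add_pow]
      exact Finset.sum_congr rfl fun q hq => by ring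
    rw [heq]
    exact integrable_finset_sum _ fun q hq =>
      (hSint q (le_trans (Nat.lt_succ_iff.mp (Finset.mem_range.mp hq)) ht)).mul_const _
  -- upper bound
  have hSa : ∫ ω, S ω ^ a ∂ℙ ≤ cU * (sk.card : ℝ) ^ m :=
    aux_upper W hmeasW hindepW a m ham hintW h0W M hM1 hmomW sk hcard1
  have hcardle : (sk.card : ℝ) ^ m ≤ 3 ^ m * (k:ℝ) ^ m := by
    have h1 : (sk.card : ℝ) ≤ 3 * (k:ℝ) := by
      rw [hcard]; push_cast
      have h2 : (r k : ℝ) ≤ (k : ℝ) := le_trans hrk hhalf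
      linarith
    calc (sk.card:ℝ) ^ m ≤ (3 * (k:ℝ)) ^ m := pow_le_pow_left₀ (Nat.cast_nonneg _) h1 m
      _ = 3 ^ m * (k:ℝ) ^ m := mul_pow _ _ _
  have hupper : ∫ ω, D ω ^ a ∂ℙ ≤ c2 * (k:ℝ) ^ m := by
    have hmono : ∫ ω, D ω ^ a ∂ℙ ≤ ∫ ω, 2 ^ a * (S ω ^ a + (r k:ℝ) ^ a) ∂ℙ := by
      refine integral_mono (hDint a le_rfl)
        (((hSint a le_rfl).add (integrable_const _)).const_mul _) (fun ω => ?_)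
      have := hsum_pow (S ω) ((r k : ℝ))
      rw [← hDS ω] at this
      exact this
    have hval : ∫ ω, 2 ^ a * (S ω ^ a + (r k:ℝ) ^ a) ∂ℙ
        = 2 ^ a * ((∫ ω, S ω ^ a ∂ℙ) + (r k:ℝ) ^ a) := by
      rw [MeasureTheory.integral_const_mul, integral_add (hSint a le_rfl) (integrable_const _),
        integral_const]
      simp
    rw [hval] at hmono
    calc ∫ ω, D ω ^ a ∂ℙ ≤ 2 ^ a * ((∫ ω, S ω ^ a ∂ℙ) + (r k:ℝ) ^ a) := hmono
      _ ≤ 2 ^ a * (cU * (3 ^ m * (k:ℝ) ^ m) + (k:ℝ) ^ m) := by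
          have hS3 : ∫ ω, S ω ^ a ∂ℙ ≤ cU * (3 ^ m * (k:ℝ) ^ m) :=
            le_trans hSa (mul_le_mul_of_nonneg_left hcardle hcU.le)
          have := add_le_add hS3 hrka
          exact mul_le_mul_of_nonneg_left this (by positivity)
      _ = c2 * (k:ℝ) ^ m := by rw [hc2def]; ring
  -- lower bound
  have hSint1 : Integrable S ℙ := integrable_finset_sum sk (fun j _ => hintW1 j)
  have hS0 : ∫ ω, S ω ∂ℙ = 0 := by
    show ∫ ω, ∑ j ∈ sk, W j ω ∂ℙ = 0
    rw [integral_finset_sum _ (fun j _ => hintW1 j)]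
    simp [h0W]
  have hSsq : ∫ ω, S ω ^ 2 ∂ℙ = (sk.card : ℝ) * v := by
    have h1 := aux_sum_sq W hmeasW hindepW hintW1 (fun j => hintW j 2 (by omega)) h0W sk
    calc ∫ ω, S ω ^ 2 ∂ℙ = ∫ ω, (∑ j ∈ sk, W j ω) ^ 2 ∂ℙ := rfl
      _ = ∑ j ∈ sk, ∫ ω, W j ω ^ 2 ∂ℙ := h1
      _ = (sk.card : ℝ) * v := by
          rw [Finset.sum_congr rfl (fun j _ => hWsq j), Finset.sum_const, nsmul_eq_mul]
  have hD2 : ∫ ω, D ω ^ 2 ∂ℙ = (sk.card:ℝ) * v + (r k:ℝ) ^ 2 := by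
    have heq : (fun ω => D ω ^ 2)
        = fun ω => S ω ^ 2 + (2 * (r k:ℝ) * S ω + (r k:ℝ) ^ 2) := by
      funext ω; rw [hDS ω]; ring
    have hin : Integrable (fun ω => 2 * (r k:ℝ) * S ω + (r k:ℝ) ^ 2) ℙ :=
      (hSint1.const_mul _).add (integrable_const _)
    calc ∫ ω, D ω ^ 2 ∂ℙ
        = ∫ ω, (S ω ^ 2 + (2 * (r k:ℝ) * S ω + (r k:ℝ) ^ 2)) ∂ℙ := by rw [heq]
      _ = (∫ ω, S ω ^ 2 ∂ℙ) + ∫ ω, (2 * (r k:ℝ) * S ω + (r k:ℝ) ^ 2) ∂ℙ :=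
          integral_add (hSint 2 (by omega)) hin
      _ = (sk.card:ℝ) * v + (r k:ℝ) ^ 2 := by
          rw [hSsq, integral_add (hSint1.const_mul _) (integrable_const _),
            MeasureTheory.integral_const_mul, hS0, integral_const]
          simp
  have hD2ge : 2 * v * (k:ℝ) ≤ ∫ ω, D ω ^ 2 ∂ℙ := by
    rw [hD2]
    have h2k : 2 * (k:ℝ) ≤ (sk.card:ℝ) := by
      rw [hcard]; push_cast
      have := Nat.cast_nonneg (α := ℝ) (r k)
      linarith
    nlinarith [sq_nonneg ((r k : ℝ))]
  have hjensen : (∫ ω, D ω ^ 2 ∂ℙ) ^ m ≤ ∫ ω, D ω ^ a ∂ℙ := by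
    have hDsq : Integrable (fun ω => D ω ^ 2) ℙ := hDint 2 (by omega)
    have hcomp : Integrable ((fun x : ℝ => x ^ m) ∘ (fun ω => D ω ^ 2)) ℙ := by
      refine (hDint a le_rfl).congr (Filter.Eventually.of_forall fun ω => ?_)
      show D ω ^ a = (D ω ^ 2) ^ m
      rw [ham, pow_mul]
    have h := (convexOn_pow m).map_average_le ((continuous_pow m).continuousOn) isClosed_Ici
      (Filter.Eventually.of_forall fun ω => sq_nonneg (D ω)) hDsq hcomp
    rw [average_eq_integral, average_eq_integral] at h
    calc (∫ ω, D ω ^ 2 ∂ℙ) ^ m ≤ ∫ ω, (D ω ^ 2) ^ m ∂ℙ := h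
      _ = ∫ ω, D ω ^ a ∂ℙ := by
          congr 1; funext ω; rw [ham, pow_mul]
  have hlower : c1 * (k:ℝ) ^ m ≤ ∫ ω, D ω ^ a ∂ℙ := by
    calc c1 * (k:ℝ) ^ m = (2 * v * (k:ℝ)) ^ m := by rw [hc1def, ← mul_pow]
      _ ≤ (∫ ω, D ω ^ 2 ∂ℙ) ^ m := pow_le_pow_left₀ (by positivity) hD2ge m
      _ ≤ ∫ ω, D ω ^ a ∂ℙ := hjensen
  -- rescale by lam
  have hintegrand : (fun ω => |(1/lam) * (∑ i ∈ Finset.range (k + r k), ξ i ω)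
      - (1/lam) * (∑ i ∈ Finset.range k, τ i ω)| ^ a)
      = fun ω => (1/lam ^ a) * D ω ^ a := by
    funext ω
    rw [← mul_sub, abs_mul, mul_pow, abs_of_pos (by positivity : (0:ℝ) < 1/lam),
      div_pow, one_pow]
    congr 1
    exact haeE.pow_abs _
  have hla : (0:ℝ) < lam ^ a := pow_pos hlam a
  have hrw : ∫ ω, |(1/lam) * (∑ i ∈ Finset.range (k + r k), ξ i ω)
      - (1/lam) * (∑ i ∈ Finset.range k, τ i ω)| ^ a ∂ℙ
      = (∫ ω, D ω ^ a ∂ℙ) / lam ^ a := by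
    rw [hintegrand, MeasureTheory.integral_const_mul]
    ring
  rw [ha2]
  constructor
  · rw [hrw]
    gcongr
  · rw [hrw]
    gcongr
end

section
/- Let a be an even positive integer. There exists a constant D > 0 depending only on a such that for every integer k > a/2, the number of tuples (l_1, l_2, …, l_k) of natural numbers with l_1 + l_2 + ⋯ + l_k = a, every l_i even, and at least one l_i ∉ {0, 2}, is at most D · k^{a/2 − 1}. Moreover, the number of tuples (l_1, …, l_k) of natural numbers with l_1 + ⋯ + l_k = a and every l_i ∈ {0, 2} equals the binomial coefficient C(k, a/2). -/
open Finset

/-- Part 2 helper: tuples with entries in `{0,2}` summing to `2m` are counted by `C(k,m)`. -/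
lemma card_zero_two_tuples (k m : ℕ) :
    ((Finset.Nat.antidiagonalTuple k (2 * m)).filter
        (fun l : Fin k → ℕ => ∀ i, l i = 0 ∨ l i = 2)).card = k.choose m := by
  have h := Finset.card_powersetCard m (Finset.univ : Finset (Fin k))
  rw [Finset.card_univ, Fintype.card_fin] at h
  rw [← h]
  apply Finset.card_bij' (fun l _ => Finset.univ.filter (fun i => l i = 2))
    (fun s _ => fun i => if i ∈ s then 2 else 0)
  · intro l hl
    simp only [Finset.mem_filter] at hl
    funext i
    rcases hl.2 i with h | h <;> simp [h]
  · intro s hs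
    ext i
    simp only [Finset.mem_filter, Finset.mem_univ, true_and]
    by_cases h : i ∈ s <;> simp [h]


  · intro l hl
    simp only [Finset.mem_filter, Finset.Nat.mem_antidiagonalTuple] at hl
    obtain ⟨hsum, hval⟩ := hl
    rw [Finset.mem_powersetCard]
    refine ⟨Finset.filter_subset _ _ |>.trans (le_refl _), ?_⟩
    have h2 : (Finset.univ.filter (fun i => l i = 2)).card * 2
        = ∑ i, l i := by
      rw [Finset.card_filter]
      rw [Finset.sum_mul]
      apply Finset.sum_congr rfl
      intro i _
      rcases hval i with h | h <;> simp [h]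
    omega
  · intro s hs
    rw [Finset.mem_powersetCard] at hs
    simp only [Finset.mem_filter, Finset.Nat.mem_antidiagonalTuple]
    constructor
    · rw [Finset.sum_ite_mem, Finset.univ_inter, Finset.sum_const, hs.2]
      ring
    · intro i
      by_cases h : i ∈ s <;> simp [h]
lemma support_card_bound {k a m : ℕ} (hm : a = 2 * m) (l : Fin k → ℕ)
    (hsum : ∑ i, l i = a) (heven : ∀ i, Even (l i))
    (hbig : ∃ i, l i ≠ 0 ∧ l i ≠ 2) :
    (Finset.univ.filter (fun i => l i ≠ 0)).card ≤ m - 1 := by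
  obtain ⟨i₀, hi₀⟩ := hbig
  set s := Finset.univ.filter (fun i => l i ≠ 0) with hs
  have hi₀s : i₀ ∈ s := by simp [hs, hi₀.1]
  have hsum' : ∑ i ∈ s, l i = a := by
    rw [hs, Finset.sum_filter_ne_zero, hsum]
  have h4 : 4 ≤ l i₀ := by
    obtain ⟨t, ht⟩ := heven i₀; omega
  have h2 : ∀ i ∈ s.erase i₀, 2 ≤ l i := by
    intro i hi
    have : l i ≠ 0 := by
      have := Finset.mem_of_mem_erase hi
      simp [hs] at this; exact this
    obtain ⟨t, ht⟩ := heven i; omega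
  have hlow : (s.erase i₀).card * 2 ≤ ∑ i ∈ s.erase i₀, l i := by
    calc (s.erase i₀).card * 2 = ∑ _i ∈ s.erase i₀, 2 := by
          rw [Finset.sum_const]; ring
      _ ≤ ∑ i ∈ s.erase i₀, l i := Finset.sum_le_sum h2
  have hsplit : l i₀ + ∑ i ∈ s.erase i₀, l i = a := by
    rw [Finset.add_sum_erase _ _ hi₀s, hsum']
  have hcard : (s.erase i₀).card = s.card - 1 := Finset.card_erase_of_mem hi₀s
  have hpos : 0 < s.card := Finset.card_pos.mpr ⟨i₀, hi₀s⟩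
  omega

/-- For an even positive integer `a` and `k > a/2`: the number of tuples
`(l_1, …, l_k) ∈ ℕ^k` with sum `a`, all entries even, and some entry outside `{0, 2}`
is `O(k^(a/2 - 1))` (with a constant `D` depending only on `a`), and the number of such
tuples with every entry in `{0, 2}` is exactly `C(k, a/2)`. -/
theorem card_even_tuples_asymptotics
    (a : ℕ) (ha0 : 0 < a) (hae : Even a) :
    ∃ D : ℝ, 0 < D ∧ ∀ k : ℕ, a / 2 < k →
      (((Finset.Nat.antidiagonalTuple k a).filter
          (fun l : Fin k → ℕ => (∀ i, Even (l i)) ∧ ∃ i, l i ≠ 0 ∧ l i ≠ 2)).card : ℝ)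
        ≤ D * (k : ℝ) ^ (a / 2 - 1) ∧
      ((Finset.Nat.antidiagonalTuple k a).filter
          (fun l : Fin k → ℕ => ∀ i, l i = 0 ∨ l i = 2)).card = k.choose (a / 2) := by
  obtain ⟨m, hm⟩ := hae
  have hm2 : a = 2 * m := by omega
  have hdiv : a / 2 = m := by omega
  have hm0 : 0 < m := by omega
  refine ⟨(m * (a + 1) ^ (m - 1) : ℕ), by positivity, fun k hk => ⟨?_, ?_⟩⟩
  · -- part 1
    have hk0 : 0 < k := by omega
    rw [hdiv] at hk ⊢
    -- injection into small-support subsets of Fin k × ℕ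
    set S := (Finset.Nat.antidiagonalTuple k a).filter
        (fun l : Fin k → ℕ => (∀ i, Even (l i)) ∧ ∃ i, l i ≠ 0 ∧ l i ≠ 2) with hS
    set T := ((Finset.univ : Finset (Fin k)) ×ˢ Finset.range (a + 1)).powerset.filter
        (fun s => s.card ≤ m - 1) with hT
    have hST : S.card ≤ T.card := by
      apply Finset.card_le_card_of_injOn
        (fun l => (Finset.univ.filter (fun i => l i ≠ 0)).image (fun i => (i, l i)))
      · intro l hl
        simp only [hS, Finset.mem_coe, Finset.mem_filter, Finset.Nat.mem_antidiagonalTuple] at hl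
        obtain ⟨hsum, heven, hbig⟩ := hl
        have hinj : Set.InjOn (fun i => (i, l i))
            (Finset.univ.filter (fun i => l i ≠ 0)) := by
          intro x _ y _ hxy
          exact (Prod.mk.injEq _ _ _ _).mp hxy |>.1
        simp only [hT, Finset.mem_coe, Finset.mem_filter, Finset.mem_powerset]
        constructor
        · intro p hp
          simp only [Finset.mem_image, Finset.mem_filter] at hp
          obtain ⟨i, hi, rfl⟩ := hp
          simp only [Finset.mem_product, Finset.mem_univ, true_and, Finset.mem_range]
          have : l i ≤ a := hsum ▸ Finset.single_le_sum (fun j _ => Nat.zero_le (l j))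
            (Finset.mem_univ i)
          omega
        · rw [Finset.card_image_of_injOn hinj]
          exact support_card_bound hm2 l hsum heven hbig
      · intro l hl l' hl' heq
        replace heq : (Finset.univ.filter (fun j => l j ≠ 0)).image (fun j => (j, l j))
            = (Finset.univ.filter (fun j => l' j ≠ 0)).image (fun j => (j, l' j)) := heq
        simp only [hS, Finset.coe_filter, Set.mem_setOf_eq] at hl hl'
        funext i
        by_cases h : l i = 0
        · by_cases h' : l' i = 0
          · rw [h, h']
          · have : (i, l' i) ∈ (Finset.univ.filter (fun j => l' j ≠ 0)).image
                (fun j => (j, l' j)) := by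
              simp only [Finset.mem_image, Finset.mem_filter]
              exact ⟨i, by simp [h'], rfl⟩
            rw [← heq] at this
            simp only [Finset.mem_image, Finset.mem_filter] at this
            obtain ⟨j, hj, hji⟩ := this
            have h1 : j = i := congrArg Prod.fst hji
            subst h1
            exact absurd h hj.2
        · have : (i, l i) ∈ (Finset.univ.filter (fun j => l j ≠ 0)).image
              (fun j => (j, l j)) := by
            simp only [Finset.mem_image, Finset.mem_filter]
            exact ⟨i, by simp [h], rfl⟩
          rw [heq] at this
          simp only [Finset.mem_image, Finset.mem_filter] at this
          obtain ⟨j, hj, hji⟩ := this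
          have h1 : j = i := congrArg Prod.fst hji
          have h2 : l' j = l i := congrArg Prod.snd hji
          subst h1
          exact h2.symm
    have hTbound : T.card ≤ m * (a + 1) ^ (m - 1) * k ^ (m - 1) := by
      have hsub : T ⊆ (Finset.range m).biUnion
          (fun j => Finset.powersetCard j
            ((Finset.univ : Finset (Fin k)) ×ˢ Finset.range (a + 1))) := by
        intro s hsmem
        simp only [hT, Finset.mem_filter, Finset.mem_powerset] at hsmem
        rw [Finset.mem_biUnion]
        exact ⟨s.card, Finset.mem_range.mpr (by omega),
          Finset.mem_powersetCard.mpr ⟨hsmem.1, rfl⟩⟩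
      calc T.card ≤ _ := Finset.card_le_card hsub
        _ ≤ ∑ j ∈ Finset.range m, (Finset.powersetCard j
              ((Finset.univ : Finset (Fin k)) ×ˢ Finset.range (a + 1))).card :=
            Finset.card_biUnion_le
        _ ≤ ∑ _j ∈ Finset.range m, (a + 1) ^ (m - 1) * k ^ (m - 1) := by
            apply Finset.sum_le_sum
            intro j hj
            rw [Finset.card_powersetCard, Finset.card_product, Finset.card_univ,
              Fintype.card_fin, Finset.card_range]
            calc (k * (a + 1)).choose j ≤ (k * (a + 1)) ^ j := Nat.choose_le_pow _ _
              _ ≤ (k * (a + 1)) ^ (m - 1) := by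
                  apply Nat.pow_le_pow_right (by positivity)
                  rw [Finset.mem_range] at hj; omega
              _ = (a + 1) ^ (m - 1) * k ^ (m - 1) := by rw [mul_pow]; ring
        _ = m * ((a + 1) ^ (m - 1) * k ^ (m - 1)) := by
            rw [Finset.sum_const, Finset.card_range, smul_eq_mul]
        _ = m * (a + 1) ^ (m - 1) * k ^ (m - 1) := by ring
    calc (S.card : ℝ) ≤ (m * (a + 1) ^ (m - 1) * k ^ (m - 1) : ℕ) := by
          exact_mod_cast hST.trans hTbound
      _ = (m * (a + 1) ^ (m - 1) : ℕ) * (k : ℝ) ^ (m - 1) := by push_cast; ring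
  · rw [hdiv, hm2]
    exact card_zero_two_tuples k m
end
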